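/- Let λ > 0, l ∈ ℝ, 0 < ε < ∞, and f : (0,ε) → (0,∞) a continuous function with ∫₀^ε f(x) dx = +∞. Suppose a, b : (0,ε) → ℝ are differentiable and satisfy a'(x) = l·e^{2λx}·f(x)·b(x) and b'(x) = -l·e^{-2λx}·f(x)·a(x) for all x ∈ (0,ε), together with ∫₀^ε (a(x)² + b(x)²) f(x) dx < ∞. Then a(x) = 0 and b(x) = 0 for all x ∈ (0,ε). -/

import Mathlib

open MeasureTheory Set Filter

/-- The real system `a' = l e^{2λx} f b`, `b' = -l e^{-2λx} f a` (with `λ > 0`, `l` real,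
`0 < ε < ∞`, `f : (0,ε) → (0,∞)` continuous with divergent integral) has no nonzero
solution square-integrable with respect to `f dx`. -/
theorem transformed_system_no_L2_solution
    (lam l ε : ℝ) (hlam : 0 < lam) (hε : 0 < ε)
    (f : ℝ → ℝ) (hf_cont : ContinuousOn f (Set.Ioo 0 ε))
    (hf_pos : ∀ x ∈ Set.Ioo 0 ε, 0 < f x)
    (hf_div : ∫⁻ x in Set.Ioo 0 ε, ENNReal.ofReal (f x) = ⊤)
    (a b : ℝ → ℝ)
    (ha : ∀ x ∈ Set.Ioo 0 ε,
      HasDerivAt a (l * Real.exp (2 * lam * x) * f x * b x) x)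
    (hb : ∀ x ∈ Set.Ioo 0 ε,
      HasDerivAt b (-(l * Real.exp (-(2 * lam * x)) * f x * a x)) x)
    (hL2 : ∫⁻ x in Set.Ioo 0 ε,
      ENNReal.ofReal ((a x ^ 2 + b x ^ 2) * f x) < ⊤) :
    ∀ x ∈ Set.Ioo 0 ε, a x = 0 ∧ b x = 0 := by
  intro x hx
  by_contra hcon
  -- the "energy" functions
  set M : ℝ → ℝ := fun t => a t ^ 2 + Real.exp (4 * lam * t) * b t ^ 2 with hMdef
  set N : ℝ → ℝ := fun t => Real.exp (-(4 * lam * t)) * a t ^ 2 + b t ^ 2 with hNdef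
  -- derivative of M
  have hM : ∀ t ∈ Set.Ioo 0 ε,
      HasDerivAt M (4 * lam * Real.exp (4 * lam * t) * b t ^ 2) t := by
    intro t ht
    have h1 := ha t ht
    have h2 := hb t ht
    have hexp : HasDerivAt (fun s : ℝ => Real.exp (4 * lam * s))
        (Real.exp (4 * lam * t) * (4 * lam)) t := by
      simpa using (((hasDerivAt_id t).const_mul (4 * lam)).exp)
    have h := (h1.pow 2).add (hexp.mul (h2.pow 2))
    convert h using 1
    · rfl
    · rfl
    · rfl
    have he : Real.exp (4 * lam * t) * Real.exp (-(2 * lam * t)) = Real.exp (2 * lam * t) := by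
      rw [← Real.exp_add]; ring_nf
    push_cast [Pi.pow_apply]
    linear_combination (2 * l * f t * a t * b t) * he
  -- derivative of N
  have hN : ∀ t ∈ Set.Ioo 0 ε,
      HasDerivAt N (-(4 * lam * Real.exp (-(4 * lam * t)) * a t ^ 2)) t := by
    intro t ht
    have h1 := ha t ht
    have h2 := hb t ht
    have hexp : HasDerivAt (fun s : ℝ => Real.exp (-(4 * lam * s)))
        (Real.exp (-(4 * lam * t)) * (-(4 * lam))) t := by
      simpa using (((hasDerivAt_id t).const_mul (-(4 * lam))).exp)
    have h := (hexp.mul (h1.pow 2)).add (h2.pow 2)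
    convert h using 1
    · rfl
    · rfl
    · rfl
    have he : Real.exp (-(4 * lam * t)) * Real.exp (2 * lam * t) = Real.exp (-(2 * lam * t)) := by
      rw [← Real.exp_add]; ring_nf
    push_cast [Pi.pow_apply]
    linear_combination (-(2 * l * f t * a t * b t)) * he
  have hint : interior (Set.Ioo (0:ℝ) ε) = Set.Ioo 0 ε := isOpen_Ioo.interior_eq
  -- M is monotone on Ioo 0 ε
  have hMmono : MonotoneOn M (Set.Ioo 0 ε) := by
    apply monotoneOn_of_deriv_nonneg (convex_Ioo 0 ε)
    · exact fun t ht => ((hM t ht).continuousAt).continuousWithinAt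
    · rw [hint]; exact fun t ht => ((hM t ht).differentiableAt).differentiableWithinAt
    · rw [hint]
      intro t ht
      rw [(hM t ht).deriv]
      positivity
  -- N is antitone on Ioo 0 ε
  have hNanti : AntitoneOn N (Set.Ioo 0 ε) := by
    apply antitoneOn_of_deriv_nonpos (convex_Ioo 0 ε)
    · exact fun t ht => ((hN t ht).continuousAt).continuousWithinAt
    · rw [hint]; exact fun t ht => ((hN t ht).differentiableAt).differentiableWithinAt
    · rw [hint]
      intro t ht
      rw [(hN t ht).deriv]
      have : (0:ℝ) ≤ 4 * lam * Real.exp (-(4 * lam * t)) * a t ^ 2 := by positivity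
      linarith
  -- positivity at x
  have hx2 : 0 < a x ^ 2 + b x ^ 2 := by
    rcases eq_or_ne (a x) 0 with h1 | h1
    · rcases eq_or_ne (b x) 0 with h2 | h2
      · exact absurd ⟨h1, h2⟩ hcon
      · positivity
    · positivity
  have hMx : 0 < M x := by
    have : (0:ℝ) < Real.exp (4 * lam * x) := Real.exp_pos _
    rcases eq_or_ne (a x) 0 with h1 | h1
    · rcases eq_or_ne (b x) 0 with h2 | h2
      · exact absurd ⟨h1, h2⟩ hcon
      · have : 0 < b x ^ 2 := by positivity
        simp only [hMdef]; nlinarith [sq_nonneg (a x)]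
    · have : 0 < a x ^ 2 := by positivity
      simp only [hMdef]; nlinarith [sq_nonneg (b x), Real.exp_pos (4 * lam * x), sq_nonneg (b x)]
  have hNx : 0 < N x := by
    rcases eq_or_ne (a x) 0 with h1 | h1
    · rcases eq_or_ne (b x) 0 with h2 | h2
      · exact absurd ⟨h1, h2⟩ hcon
      · have : 0 < b x ^ 2 := by positivity
        simp only [hNdef]; nlinarith [Real.exp_pos (-(4 * lam * x)), sq_nonneg (a x),
          mul_nonneg (Real.exp_pos (-(4 * lam * x))).le (sq_nonneg (a x))]
    · have h2 : 0 < a x ^ 2 := by positivity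
      simp only [hNdef]
      nlinarith [Real.exp_pos (-(4 * lam * x)), sq_nonneg (b x),
        mul_pos (Real.exp_pos (-(4 * lam * x))) h2]
  -- the positive lower bound
  set C : ℝ := Real.exp (-(4 * lam * ε)) with hCdef
  have hC0 : 0 < C := Real.exp_pos _
  set δ : ℝ := min (C * M x) (N x) with hδdef
  have hδ0 : 0 < δ := lt_min (by positivity) hNx
  -- pointwise lower bound on a² + b²
  have key : ∀ t ∈ Set.Ioo 0 ε, δ ≤ a t ^ 2 + b t ^ 2 := by
    intro t ht
    rcases le_total t x with hle | hle
    · -- use N antitone : N t ≥ N x, and exp(-(4λt)) ≤ 1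
      have h1 : N x ≤ N t := hNanti ht hx hle
      have h2 : Real.exp (-(4 * lam * t)) ≤ 1 := by
        rw [Real.exp_le_one_iff]
        nlinarith [ht.1]
      have h3 : N t ≤ a t ^ 2 + b t ^ 2 := by
        simp only [hNdef]
        nlinarith [sq_nonneg (a t)]
      have := min_le_right (C * M x) (N x)
      linarith
    · -- use M monotone : M t ≥ M x, and C * exp(4λt) ≤ 1
      have h1 : M x ≤ M t := hMmono hx ht hle
      have h2 : C * Real.exp (4 * lam * t) ≤ 1 := by
        rw [hCdef, ← Real.exp_add]
        rw [Real.exp_le_one_iff]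
        nlinarith [ht.2]
      have hC1 : C ≤ 1 := by
        rw [hCdef, Real.exp_le_one_iff]; nlinarith
      have h3 : C * M t ≤ a t ^ 2 + b t ^ 2 := by
        simp only [hMdef]
        nlinarith [sq_nonneg (a t), sq_nonneg (b t), Real.exp_pos (4 * lam * t)]
      have h4 : C * M x ≤ C * M t := by nlinarith
      have := min_le_left (C * M x) (N x)
      linarith
  -- contradiction with the integrals
  have hineq : (⊤ : ENNReal) ≤ ∫⁻ t in Set.Ioo 0 ε,
      ENNReal.ofReal ((a t ^ 2 + b t ^ 2) * f t) := by
    have e1 : (⊤ : ENNReal) = ENNReal.ofReal δ * ∫⁻ t in Set.Ioo 0 ε, ENNReal.ofReal (f t) := by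
      rw [hf_div, ENNReal.mul_top (by simpa using hδ0)]
    rw [e1, ← lintegral_const_mul' _ _ ENNReal.ofReal_ne_top]
    apply lintegral_mono_ae
    filter_upwards [ae_restrict_mem measurableSet_Ioo] with t ht
    rw [← ENNReal.ofReal_mul hδ0.le]
    apply ENNReal.ofReal_le_ofReal
    exact mul_le_mul_of_nonneg_right (key t ht) (hf_pos t ht).le
  exact absurd (lt_of_le_of_lt hineq hL2) (lt_irrefl _)
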